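/- Under the assumptions of the fourth-order Dirichlet boundary control problem on a convex polygonal domain, the unique minimizer q ∈ Q, together with the optimal state u = u_f + q and a unique adjoint state φ ∈ H²₀(Ω), satisfies the KKT system: a(u_f, v) = (f, v) − a(q, v) for all v ∈ H²₀(Ω); a(φ, v) = (u − u_d, v) for all v ∈ H²₀(Ω); and α a(q, p) = a(p, φ) − (u − u_d, p) for all p ∈ Q. -/

import Mathlib

open MeasureTheory
noncomputable section

open RealInnerProductSpace in
lemma lax_solve {W : Type*} [NormedAddCommGroup W] [InnerProductSpace ℝ W] [CompleteSpace W]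
    (B : W →L[ℝ] W →L[ℝ] ℝ) (hB : IsCoercive B) (ℓ : W →L[ℝ] ℝ) :
    ∃ q : W, ∀ w, B q w = ℓ w := by
  refine ⟨hB.continuousLinearEquivOfBilin.symm ((InnerProductSpace.toDual ℝ W).symm ℓ), fun w => ?_⟩
  have h1 := hB.continuousLinearEquivOfBilin_apply
      (hB.continuousLinearEquivOfBilin.symm ((InnerProductSpace.toDual ℝ W).symm ℓ)) w
  rw [ContinuousLinearEquiv.apply_symm_apply] at h1
  rw [← h1, InnerProductSpace.toDual_symm_apply]

lemma cs_aux {Q : Type*} [NormedAddCommGroup Q] [InnerProductSpace ℝ Q]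
    (a : Q →L[ℝ] Q →L[ℝ] ℝ) (hsymm : ∀ p q, a p q = a q p) (hpos : ∀ p, 0 ≤ a p p)
    (p w : Q) : (a p w)^2 ≤ a p p * a w w := by
  have h : ∀ x : ℝ, 0 ≤ a w w * (x*x) + (2 * a p w) * x + a p p := by
    intro x
    have h0 := hpos (p + x • w)
    have he : a (p + x • w) (p + x • w) = a w w * (x*x) + (2 * a p w) * x + a p p := by
      simp only [map_add, _root_.map_smul, ContinuousLinearMap.add_apply,
        ContinuousLinearMap.smul_apply, smul_eq_mul]
      rw [hsymm w p]; ring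
    linarith [he ▸ h0]
  have hd := discrim_le_zero h
  rw [discrim] at hd
  nlinarith

/-- The real inner product as a continuous bilinear map (no `starRingEnd`). -/
def realInnerCLM (F : Type*) [NormedAddCommGroup F] [InnerProductSpace ℝ F] :
    F →L[ℝ] F →L[ℝ] ℝ := innerSL ℝ

lemma realInnerCLM_apply {F : Type*} [NormedAddCommGroup F] [InnerProductSpace ℝ F]
    (x y : F) : realInnerCLM F x y = (inner ℝ x y : ℝ) := rfl

set_option maxHeartbeats 4000000 in
/-- Theorem 3.1 of the paper, KKT system.  In the abstract
Hilbert-space setting of the fourth order Dirichlet boundary control problem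
(`Q` = admissible controls, `V` = `H²₀(Ω)`, `ι : Q ↪ L²(Ω)`,
`a(w,v) = ∫_Ω Δw Δv dx`, data `f, u_d ∈ L²(Ω)`, `α > 0`), the unique minimizer
`q` of the reduced cost, together with the optimal state `u = u_f + q` and a
unique adjoint state `φ ∈ V = H²₀(Ω)`, satisfies the optimality (KKT) system:
`a(u_f,v) = (f,v) − a(q,v)` ∀ `v ∈ V`, `a(φ,v) = (u − u_d, v)` ∀ `v ∈ V`,
`α a(q,p) = a(p,φ) − (u − u_d, p)` ∀ `p ∈ Q`. -/
theorem KKT_optimality_system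
    {Q F : Type*} [NormedAddCommGroup Q] [InnerProductSpace ℝ Q] [CompleteSpace Q]
    [NormedAddCommGroup F] [InnerProductSpace ℝ F] [CompleteSpace F]
    (V : Submodule ℝ Q) (hVclosed : IsClosed (V : Set Q))
    (ι : Q →L[ℝ] F) (hι : Function.Injective ι)
    (a : Q →L[ℝ] Q →L[ℝ] ℝ)
    (hsymm : ∀ p q : Q, a p q = a q p)
    (hpos : ∀ p : Q, 0 ≤ a p p)
    (hcoer : ∃ c > 0, ∀ v ∈ V, c * ‖v‖^2 ≤ a v v)
    (hnorm : ∃ c > 0, ∀ p : Q, c * ‖p‖^2 ≤ a p p + ‖ι p‖^2)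
    (f ud : F) (α : ℝ) (hα : 0 < α)
    (S : Q → Q) (hSV : ∀ p, S p ∈ V)
    (hS : ∀ p : Q, ∀ v ∈ V, a (S p) v = (inner ℝ f (ι v) : ℝ) - a p v)
    (j : Q → ℝ)
    (hj : ∀ p : Q, j p = (1/2) * ‖ι (S p + p) - ud‖^2 + (α/2) * a p p) :
    ∃ (q uf φ : Q),
      (∀ p : Q, j q ≤ j p) ∧ (∀ q' : Q, (∀ p : Q, j q' ≤ j p) → q' = q) ∧
      uf ∈ V ∧ φ ∈ V ∧
      (∀ v ∈ V, a uf v = (inner ℝ f (ι v) : ℝ) - a q v) ∧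
      (∀ v ∈ V, a φ v = (inner ℝ (ι (uf + q) - ud) (ι v) : ℝ)) ∧
      (∀ p : Q, α * a q p = a p φ - (inner ℝ (ι (uf + q) - ud) (ι p) : ℝ)) ∧
      (∀ uf' φ' : Q, uf' ∈ V → φ' ∈ V →
        (∀ v ∈ V, a uf' v = (inner ℝ f (ι v) : ℝ) - a q v) →
        (∀ v ∈ V, a φ' v = (inner ℝ (ι (uf' + q) - ud) (ι v) : ℝ)) →
        uf' = uf ∧ φ' = φ) := by
  obtain ⟨c₀, hc₀, hcoerV⟩ := hcoer
  obtain ⟨c₁, hc₁, hnormc⟩ := hnorm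
  haveI : CompleteSpace V := hVclosed.completeSpace_coe
  have cs := cs_aux a hsymm hpos
  -- a vanishing on V forces 0 in V
  have hzero : ∀ w ∈ V, (∀ v ∈ V, a w v = 0) → w = 0 := by
    intro w hw h
    have h1 := hcoerV w hw
    have h2 := h w hw
    have h3 : ‖w‖^2 = 0 := le_antisymm (by nlinarith [sq_nonneg ‖w‖]) (sq_nonneg _)
    exact norm_eq_zero.mp (pow_eq_zero_iff two_ne_zero |>.mp h3)
  -- the linear part of S
  set T : Q → Q := fun p => S p - S 0 with hT
  have hTV : ∀ p, T p ∈ V := fun p => V.sub_mem (hSV p) (hSV 0)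
  have hTa : ∀ p : Q, ∀ v ∈ V, a (T p) v = - a p v := by
    intro p v hv
    have h1 := hS p v hv
    have h2 := hS 0 v hv
    simp only [hT, map_sub, ContinuousLinearMap.sub_apply, h1, h2]
    simp
  have hTadd : ∀ p p' : Q, T (p + p') = T p + T p' := by
    intro p p'
    have h0 : T (p + p') - (T p + T p') = 0 := by
      refine hzero _ (V.sub_mem (hTV _) (V.add_mem (hTV p) (hTV p'))) (fun v hv => ?_)
      simp only [map_sub, map_add, ContinuousLinearMap.sub_apply, ContinuousLinearMap.add_apply,
        hTa _ v hv, hTa p v hv, hTa p' v hv]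
      ring
    exact sub_eq_zero.mp h0
  have hTsmul : ∀ (c : ℝ) (p : Q), T (c • p) = c • T p := by
    intro c p
    have h0 : T (c • p) - c • T p = 0 := by
      refine hzero _ (V.sub_mem (hTV _) (V.smul_mem c (hTV p))) (fun v hv => ?_)
      simp only [map_sub, _root_.map_smul, ContinuousLinearMap.sub_apply,
        ContinuousLinearMap.smul_apply, hTa _ v hv, hTa p v hv, smul_eq_mul]
      ring
    exact sub_eq_zero.mp h0
  have habs : ∀ p w : Q, |a p w| ≤ ‖a‖ * ‖p‖ * ‖w‖ := by
    intro p w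
    calc |a p w| = ‖a p w‖ := (Real.norm_eq_abs _).symm
      _ ≤ ‖a p‖ * ‖w‖ := (a p).le_opNorm _
      _ ≤ ‖a‖ * ‖p‖ * ‖w‖ := by
          exact mul_le_mul_of_nonneg_right (a.le_opNorm p) (norm_nonneg w)
  have hTbound : ∀ p, ‖T p‖ ≤ (‖a‖/c₀) * ‖p‖ := by
    intro p
    have h1 := hcoerV (T p) (hTV p)
    have h2 : a (T p) (T p) = - a p (T p) := hTa p (T p) (hTV p)
    have h3 := habs p (T p)
    rcases eq_or_lt_of_le (norm_nonneg (T p)) with h | h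
    · rw [← h]; positivity
    · rw [div_mul_eq_mul_div, le_div_iff₀ hc₀]
      have h4 := (abs_le.mp h3).1
      nlinarith
  -- upgrade T to a continuous linear map
  let Tl : Q →ₗ[ℝ] Q :=
    { toFun := T, map_add' := hTadd, map_smul' := hTsmul }
  let Tc : Q →L[ℝ] Q := Tl.mkContinuous (‖a‖/c₀) hTbound
  have hTc : ∀ p, Tc p = T p := fun p => rfl
  let L : Q →L[ℝ] F := ι.comp (ContinuousLinearMap.id ℝ Q + Tc)
  have hL : ∀ p, L p = ι (p + T p) := fun p => rfl
  set b : F := ud - ι (S 0) with hb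
  have hLb : ∀ p, ι (S p + p) - ud = L p - b := by
    intro p
    rw [hL]
    have h0 : S p + p = (p + T p) + S 0 := by simp [hT]; abel
    rw [h0, map_add, hb]; abel
  set B : Q →L[ℝ] Q →L[ℝ] ℝ := ((realInnerCLM F).bilinearComp L L) + α • a with hBdef
  have hB : ∀ p p', B p p' = (inner ℝ (L p) (L p') : ℝ) + α * a p p' := by
    intro p p'
    rw [hBdef]
    simp [ContinuousLinearMap.bilinearComp_apply, ContinuousLinearMap.add_apply,
      ContinuousLinearMap.smul_apply, realInnerCLM_apply, smul_eq_mul]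
  have hBsymm : ∀ p p', B p p' = B p' p := by
    intro p p'
    rw [hB, hB, real_inner_comm, hsymm]
  have hBpp : ∀ p, B p p = ‖L p‖^2 + α * a p p := by
    intro p
    rw [hB, real_inner_self_eq_norm_sq]
  have hTaa : ∀ p, a (T p) (T p) ≤ a p p := by
    intro p
    have h2 : a (T p) (T p) = - a p (T p) := hTa p (T p) (hTV p)
    have h3 := cs p (T p)
    nlinarith [hpos p, hpos (T p)]
  have key : ∀ p, c₁ * ‖p‖^2 ≤ 2 * ‖L p‖^2 + (1 + 2*‖ι‖^2/c₀) * a p p := by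
    intro p
    have h1 := hnormc p
    have h2 : ‖ι p‖ ≤ ‖L p‖ + ‖ι‖ * ‖T p‖ := by
      have h0 : ι p = L p - ι (T p) := by rw [hL, map_add]; abel
      rw [h0]
      exact (norm_sub_le _ _).trans (by gcongr; exact ι.le_opNorm _)
    have h3 : c₀ * ‖T p‖^2 ≤ a p p := le_trans (hcoerV _ (hTV p)) (hTaa p)
    have h4 : 2*‖ι‖^2 * ‖T p‖^2 ≤ (2*‖ι‖^2/c₀) * a p p := by
      rw [div_mul_eq_mul_div, le_div_iff₀ hc₀]
      nlinarith [sq_nonneg ‖ι‖]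
    nlinarith [norm_nonneg (L p), norm_nonneg (T p), norm_nonneg (ι p), norm_nonneg ι,
      sq_nonneg (‖L p‖ - ‖ι‖*‖T p‖), hpos p]
  set K : ℝ := max 2 ((1 + 2*‖ι‖^2/c₀)/α) with hKdef
  have hK2 : (2:ℝ) ≤ K := le_max_left _ _
  have hKα : (1 + 2*‖ι‖^2/c₀) ≤ K * α := by
    have h0 := le_max_right 2 ((1 + 2*‖ι‖^2/c₀)/α)
    rw [← hKdef] at h0
    exact (div_le_iff₀ hα).mp h0
  have hKpos : (0:ℝ) < K := lt_of_lt_of_le two_pos hK2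
  have hBcoer : IsCoercive B := by
    refine ⟨c₁/K, div_pos hc₁ hKpos, fun p => ?_⟩
    have h5 := key p
    have h6 : 2*‖L p‖^2 + (1+2*‖ι‖^2/c₀) * a p p ≤ K * (B p p) := by
      rw [hBpp]
      nlinarith [hpos p, sq_nonneg ‖L p‖]
    rw [div_mul_eq_mul_div, div_mul_eq_mul_div, div_le_iff₀ hKpos]
    nlinarith [norm_nonneg p]
  -- solve the Euler equation B q · = ⟪b, L ·⟫
  obtain ⟨q, hq⟩ := lax_solve B hBcoer ((realInnerCLM F b).comp L)
  have hqE : ∀ p, (inner ℝ (L q) (L p) : ℝ) + α * a q p = (inner ℝ b (L p) : ℝ) := by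
    intro p
    have h0 := hq p
    rw [hB] at h0
    simpa [ContinuousLinearMap.comp_apply, realInnerCLM_apply] using h0
  have hqB : ∀ p, B q p = (inner ℝ b (L p) : ℝ) := by
    intro p; rw [hB]; exact hqE p
  have hj2 : ∀ p, j p = (1/2) * B p p - (inner ℝ b (L p) : ℝ) + (1/2)*‖b‖^2 := by
    intro p
    rw [hj p, hLb p, norm_sub_sq_real, hBpp p, real_inner_comm (L p) b]
    ring
  have hmindiff : ∀ p, j p - j q = (1/2) * B (p - q) (p - q) := by
    intro p
    have h0 : p = q + (p - q) := by abel
    have e1 : B p p = B q q + 2 * B q (p - q) + B (p-q) (p-q) := by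
      calc B p p = B (q + (p - q)) (q + (p - q)) := by rw [← h0]
        _ = B q q + B q (p-q) + (B (p-q) q + B (p-q) (p-q)) := by
            simp only [map_add, ContinuousLinearMap.add_apply]; ring
        _ = B q q + 2 * B q (p - q) + B (p-q) (p-q) := by rw [hBsymm (p-q) q]; ring
    have e2 : (inner ℝ b (L p) : ℝ) = (inner ℝ b (L q) : ℝ) + (inner ℝ b (L (p - q)) : ℝ) := by
      rw [map_sub, inner_sub_right]; ring
    rw [hj2 p, hj2 q, e1, e2, hqB (p - q)]
    ring
  have hmin : ∀ p, j q ≤ j p := by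
    intro p
    have h0 := hmindiff p
    have h1 : 0 ≤ B (p - q) (p - q) := by
      rw [hBpp]
      nlinarith [sq_nonneg ‖L (p-q)‖, hpos (p-q)]
    linarith
  have huniq : ∀ q' : Q, (∀ p, j q' ≤ j p) → q' = q := by
    intro q' h
    have h1 : j q' = j q := le_antisymm (h q) (hmin q')
    have h2 := hmindiff q'
    obtain ⟨C, hC, hCc⟩ := hBcoer
    have h3 := hCc (q' - q)
    have hBd : B (q' - q) (q' - q) ≤ 0 := by linarith
    have h7 : C * (‖q' - q‖ * ‖q' - q‖) ≤ C * 0 := by rw [mul_zero, ← mul_assoc]; linarith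
    have h4 : ‖q' - q‖ * ‖q' - q‖ ≤ 0 := (mul_le_mul_iff_right₀ hC).mp h7
    have h5 : q' - q = 0 :=
      norm_eq_zero.mp (mul_self_eq_zero.mp (le_antisymm h4 (mul_self_nonneg _)))
    exact sub_eq_zero.mp h5
  -- the adjoint state
  set e : F := ι (S q + q) - ud with hedef
  set aV : V →L[ℝ] V →L[ℝ] ℝ := a.bilinearComp V.subtypeL V.subtypeL with haVdef
  have haV : ∀ v w : V, aV v w = a (v : Q) (w : Q) := fun v w => rfl
  have haVcoer : IsCoercive aV := by
    refine ⟨c₀, hc₀, fun v => ?_⟩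
    rw [haV, mul_assoc, ← pow_two]
    exact hcoerV (v : Q) v.2
  obtain ⟨φ₀, hφ₀⟩ := lax_solve aV haVcoer ((realInnerCLM F e).comp (ι.comp V.subtypeL))
  set φ : Q := (φ₀ : Q) with hφdef
  have hφV : φ ∈ V := φ₀.2
  have hφeq : ∀ v ∈ V, a φ v = (inner ℝ e (ι v) : ℝ) := by
    intro v hv
    have h0 := hφ₀ ⟨v, hv⟩
    rw [haV] at h0
    simpa [ContinuousLinearMap.comp_apply, realInnerCLM_apply] using h0
  refine ⟨q, S q, φ, hmin, huniq, hSV q, hφV, hS q, fun v hv => hφeq v hv, ?_, ?_⟩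
  · -- variational equation for the control
    intro p
    have h1 := hqE p
    have hbL : b - L q = -e := by
      rw [hL q, hb, hedef]
      have h0 : q + T q = (S q + q) - S 0 := by simp only [hT]; abel
      rw [h0, map_sub]
      abel
    have h2 : α * a q p = (inner ℝ (b - L q) (L p) : ℝ) := by
      rw [inner_sub_left]; linarith
    have h3 : (inner ℝ (b - L q) (L p) : ℝ) = -(inner ℝ e (L p) : ℝ) := by
      rw [hbL, inner_neg_left]
    have h4 : (inner ℝ e (L p) : ℝ) = (inner ℝ e (ι p) : ℝ) + (inner ℝ e (ι (T p)) : ℝ) := by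
      rw [hL p, map_add, inner_add_right]
    have h5 : (inner ℝ e (ι (T p)) : ℝ) = a φ (T p) := (hφeq (T p) (hTV p)).symm
    have h6 : a φ (T p) = - a p φ := by
      rw [hsymm φ (T p)]
      exact hTa p φ hφV
    linarith
  · -- uniqueness of the state and adjoint
    intro uf' φ' huf'V hφ'V huf' hφ'
    have hufeq : uf' = S q := by
      have h0 : uf' - S q = 0 := by
        refine hzero _ (V.sub_mem huf'V (hSV q)) (fun v hv => ?_)
        rw [map_sub, ContinuousLinearMap.sub_apply, huf' v hv, hS q v hv]
        ring
      exact sub_eq_zero.mp h0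
    rw [hufeq] at hφ'
    refine ⟨hufeq, ?_⟩
    have h0 : φ' - φ = 0 := by
      refine hzero _ (V.sub_mem hφ'V hφV) (fun v hv => ?_)
      rw [map_sub, ContinuousLinearMap.sub_apply, hφ' v hv, hφeq v hv]
      ring
    exact sub_eq_zero.mp h0
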